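/- Let V be a finite-dimensional real vector space and L ⊆ V the ℤ-span of an ℝ-basis of V (a full lattice). Then: (a) for integral cones κ ⊆ σ in L, the convex hull satisfies conv(σ − κ) = conv(σ) − conv(κ); in particular, the convex hull of any coface of σ is a coface of the real cone conv(σ); (b) if ν is a face of a real cone μ in V, then ν ∩ L is a face of the integral cone μ ∩ L. -/

import Mathlib

open Pointwise

/-- An integral cone: a subset containing `0` and closed under addition. -/
def IsCone {L : Type*} [AddCommMonoid L] (σ : Set L) : Prop :=
  0 ∈ σ ∧ ∀ a ∈ σ, ∀ b ∈ σ, a + b ∈ σ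

/-- A face of a cone `σ`: a nonempty subset `τ ⊆ σ` such that for `a, b ∈ σ`,
`a + b ∈ τ` if and only if `a ∈ τ` and `b ∈ τ`. -/
def IsFace {L : Type*} [AddCommMonoid L] (σ τ : Set L) : Prop :=
  τ.Nonempty ∧ τ ⊆ σ ∧ ∀ a ∈ σ, ∀ b ∈ σ, (a + b ∈ τ ↔ a ∈ τ ∧ b ∈ τ)

/-- A real cone in a real vector space: contains `0`, closed under addition
and under multiplication by nonnegative scalars. -/
def IsRealCone {V : Type*} [AddCommGroup V] [Module ℝ V] (μ : Set V) : Prop :=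
  0 ∈ μ ∧ (∀ a ∈ μ, ∀ b ∈ μ, a + b ∈ μ) ∧ ∀ r : ℝ, 0 ≤ r → ∀ x ∈ μ, r • x ∈ μ

/-- (a) convex hulls commute with localisation of integral
cones, so hulls of cofaces are cofaces of the hull; (b) intersecting with the
lattice takes faces of real cones to faces of integral cones. -/
theorem stmt15
    {V : Type*} [AddCommGroup V] [Module ℝ V] [FiniteDimensional ℝ V]
    {ι : Type*} [Fintype ι] (b : Module.Basis ι ℝ V)
    (Lset : Set V) (hL : Lset = (Submodule.span ℤ (Set.range ⇑b) : Set V)) :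
    -- (a)
    (∀ σ κ : Set V, σ ⊆ Lset → IsCone σ → IsCone κ → κ ⊆ σ →
      convexHull ℝ (σ - κ) = convexHull ℝ σ - convexHull ℝ κ ∧
      ∃ ν : Set V, IsRealCone ν ∧ ν ⊆ convexHull ℝ σ ∧
        convexHull ℝ (σ - κ) = convexHull ℝ σ - ν) ∧
    -- (b)
    (∀ μ ν : Set V, IsRealCone μ → IsFace μ ν →
      IsFace (μ ∩ Lset) (ν ∩ Lset)) := by
  constructor
  · intro σ κ hσL hσ hκ hκσ
    refine ⟨convexHull_sub σ κ, convexHull ℝ κ, ?_, ?_, convexHull_sub σ κ⟩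
    · -- convexHull of an integral cone is a real cone
      have hnsmul : ∀ n : ℕ, ∀ a ∈ κ, (n : ℝ) • a ∈ κ := by
        intro n
        induction n with
        | zero => intro a _; simpa using hκ.1
        | succ n ih =>
          intro a ha
          have := hκ.2 _ (ih a ha) a ha
          push_cast
          rw [add_smul, one_smul]
          exact this
      refine ⟨subset_convexHull ℝ κ hκ.1, ?_, ?_⟩
      · intro x hx y hy
        have : x + y ∈ convexHull ℝ κ + convexHull ℝ κ := Set.add_mem_add hx hy
        rw [← convexHull_add] at this
        refine convexHull_mono ?_ this
        rintro z ⟨a, ha, c, hc, rfl⟩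
        exact hκ.2 a ha c hc
      · intro r hr x hx
        set n : ℕ := ⌈r⌉₊ + 1 with hn
        have hnpos : (0 : ℝ) < n := by positivity
        have hrn : r ≤ (n : ℝ) := by
          have := Nat.le_ceil r
          rw [hn]; push_cast; linarith
        have hnx : (n : ℝ) • x ∈ convexHull ℝ κ := by
          have : (n : ℝ) • x ∈ (n : ℝ) • convexHull ℝ κ := Set.smul_mem_smul_set hx
          rw [← convexHull_smul] at this
          refine convexHull_mono ?_ this
          rintro z ⟨a, ha, rfl⟩
          exact hnsmul n a ha
        have h0 : (0 : V) ∈ convexHull ℝ κ := subset_convexHull ℝ κ hκ.1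
        have hconv := convex_convexHull ℝ κ
        have key := hconv hnx h0 (a := r / n) (b := 1 - r / n)
          (by positivity) (by
            have : r / n ≤ 1 := (div_le_one hnpos).mpr hrn
            linarith) (by ring)
        have : (r / n) • ((n : ℝ) • x) + (1 - r / n) • (0 : V) = r • x := by
          rw [smul_zero, add_zero, smul_smul, div_mul_cancel₀ r hnpos.ne']
        rwa [this] at key
    · exact convexHull_mono hκσ
  · intro μ ν hμ hν
    have h0ν : (0 : V) ∈ ν := by
      obtain ⟨x, hx⟩ := hν.1
      have := (hν.2.2 0 hμ.1 x (hν.2.1 hx)).mp (by simpa using hx)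
      exact this.1
    have h0L : (0 : V) ∈ Lset := by
      rw [hL]; exact Submodule.zero_mem _
    have hLadd : ∀ a ∈ Lset, ∀ c ∈ Lset, a + c ∈ Lset := by
      rw [hL]; intro a ha c hc; exact Submodule.add_mem _ ha hc
    refine ⟨⟨0, h0ν, h0L⟩, fun x hx => ⟨hν.2.1 hx.1, hx.2⟩, ?_⟩
    rintro a ⟨haμ, haL⟩ c ⟨hcμ, hcL⟩
    constructor
    · rintro ⟨h, _⟩
      have := (hν.2.2 a haμ c hcμ).mp h
      exact ⟨⟨this.1, haL⟩, ⟨this.2, hcL⟩⟩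
    · rintro ⟨⟨h1, _⟩, ⟨h2, _⟩⟩
      exact ⟨(hν.2.2 a haμ c hcμ).mpr ⟨h1, h2⟩, hLadd a haL c hcL⟩
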